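/- Let n ≥ 2, let f : ℝ × ℝⁿ → ℝ be continuously differentiable, and define X : ℝ × ℝⁿ → ℝⁿ by Xⁱ(t,x) = xⁱ⁺¹ for i = 1,…,n−1 and Xⁿ(t,x) = f(t,x). Then the jet geometric Yang–Mills energy produced by the superior order ODE y⁽ⁿ⁾ = f(t,y,…,y⁽ⁿ⁻¹⁾) satisfies, for all (t,x), EYM(t,x) = Σ_{1 ≤ i < j ≤ n} F_{ij}(t,x)² = (1/4)[ n − 1 − 2·∂f/∂xⁿ⁻¹(t,x) + Σ_{j=1}^{n−1} (∂f/∂xʲ(t,x))² ]. -/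
import Mathlib


/-- Partial derivative of `g : ℝⁿ → ℝ` at `x` in the `j`-th coordinate direction. -/
noncomputable def pd {n : ℕ} (g : (Fin n → ℝ) → ℝ) (x : Fin n → ℝ) (j : Fin n) : ℝ :=
  fderiv ℝ g x (Pi.single j 1)

/-- The electromagnetic matrix produced by the first-order ODE system
`dxⁱ/dt = Xⁱ(t,x)`: `F_{ij}(t,x) = (1/2)(∂Xⁱ/∂xʲ - ∂Xʲ/∂xⁱ)`. -/
noncomputable def emF {n : ℕ} (X : ℝ → (Fin n → ℝ) → Fin n → ℝ)
    (t : ℝ) (x : Fin n → ℝ) (i j : Fin n) : ℝ :=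
  (1 / 2) * (pd (fun y => X t y i) x j - pd (fun y => X t y j) x i)

/-- The first-order system associated to the superior order ODE
`y⁽ⁿ⁾ = f(t, y, y', …, y⁽ⁿ⁻¹⁾)` via `x¹ = y, …, xⁿ = y⁽ⁿ⁻¹⁾` (0-based indexing):
`Xⁱ(t,x) = xⁱ⁺¹` for `i < n-1` and `Xⁿ⁻¹(t,x) = f(t,x)`. -/
def sodeX (n : ℕ) (f : ℝ → (Fin n → ℝ) → ℝ) : ℝ → (Fin n → ℝ) → Fin n → ℝ :=
  fun t x i => if h : (i : ℕ) + 1 < n then x ⟨(i : ℕ) + 1, h⟩ else f t x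


lemma pd_coord {n : ℕ} (k j : Fin n) (x : Fin n → ℝ) :
    pd (fun y => y k) x j = if k = j then (1:ℝ) else 0 := by
  have h : (fun y : Fin n → ℝ => y k)
      = (ContinuousLinearMap.proj k : (Fin n → ℝ) →L[ℝ] ℝ) := rfl
  rw [pd, h, ContinuousLinearMap.fderiv]
  simp [Pi.single_apply]

lemma emF_sodeX {n : ℕ} (f : ℝ → (Fin n → ℝ) → ℝ) (t : ℝ) (x : Fin n → ℝ)
    (i j : Fin n) (hij : i < j) :
    emF (sodeX n f) t x i j
      = (1/2) * ((if (i:ℕ)+1 = (j:ℕ) then (1:ℝ) else 0)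
          - (if (j:ℕ) = n-1 then pd (fun y => f t y) x i else 0)) := by
  have hj := j.isLt
  have hi : (i:ℕ) < (j:ℕ) := hij
  have hi1 : (i:ℕ) + 1 < n := by omega
  by_cases hj1 : (j:ℕ) + 1 < n
  · have hjne : ¬ ((j:ℕ) = n - 1) := by omega
    simp only [emF, sodeX, dif_pos hi1, dif_pos hj1, pd_coord, hjne, if_false]
    have h2 : ¬ ((⟨(j:ℕ)+1, hj1⟩ : Fin n) = i) := by
      simp [Fin.ext_iff]; omega
    rw [if_neg h2]
    congr 2
    simp [Fin.ext_iff, eq_comm]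
  · have hjeq : (j:ℕ) = n - 1 := by omega
    simp only [emF, sodeX, dif_pos hi1, dif_neg hj1, pd_coord]
    rw [if_pos hjeq]
    congr 3
    simp [Fin.ext_iff, eq_comm]

/-- the jet geometric Yang–Mills energy produced by the superior
order ODE `y⁽ⁿ⁾ = f(t, y, …, y⁽ⁿ⁻¹⁾)` equals
`(1/4)[n - 1 - 2 ∂f/∂xⁿ⁻¹ + ∑_{j=1}^{n-1} (∂f/∂xʲ)²]`
(1-based index `j` corresponds to the 0-based index `j - 1`; in particular the
1-based `∂f/∂xⁿ⁻¹` is the 0-based partial in direction `n - 2`). -/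
theorem yang_mills_energy_of_superior_order_ode
    (n : ℕ) (hn : 2 ≤ n)
    (f : ℝ → (Fin n → ℝ) → ℝ)
    (hf : ContDiff ℝ 1 (fun p : ℝ × (Fin n → ℝ) => f p.1 p.2)) :
    ∀ (t : ℝ) (x : Fin n → ℝ),
      ∑ p ∈ Finset.univ.filter (fun p : Fin n × Fin n => p.1 < p.2),
          emF (sodeX n f) t x p.1 p.2 ^ 2
        = (1 / 4) * ((n : ℝ) - 1 - 2 * pd (fun y => f t y) x ⟨n - 2, by omega⟩
            + ∑ j : Fin (n - 1),
                pd (fun y => f t y) x ⟨(j : ℕ), by omega⟩ ^ 2) := by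
  intro t x
  set g : Fin n → ℝ := fun i => pd (fun y => f t y) x i with hg
  have key : ∀ p ∈ Finset.univ.filter (fun p : Fin n × Fin n => p.1 < p.2),
      emF (sodeX n f) t x p.1 p.2 ^ 2
        = (1/4) * ((if (p.1:ℕ)+1 = (p.2:ℕ) then (1:ℝ) else 0)
            + (if (p.2:ℕ) = n-1 then g p.1 ^ 2 else 0)
            - 2 * (if ((p.1:ℕ)+1 = (p.2:ℕ) ∧ (p.2:ℕ) = n-1) then g p.1 else 0)) := by
    intro p hp
    simp only [Finset.mem_filter, Finset.mem_univ, true_and] at hp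
    rw [emF_sodeX f t x _ _ hp]
    split_ifs <;> first | (exfalso; tauto) | ring
  rw [Finset.sum_congr rfl key, ← Finset.mul_sum, Finset.sum_sub_distrib,
    Finset.sum_add_distrib, ← Finset.mul_sum]
  have hA : ∑ p ∈ Finset.univ.filter (fun p : Fin n × Fin n => p.1 < p.2),
      (if (p.1:ℕ)+1 = (p.2:ℕ) then (1:ℝ) else 0) = (n:ℝ) - 1 := by
    rw [← Finset.sum_filter, Finset.filter_filter]
    have hset : (Finset.univ.filter
        (fun p : Fin n × Fin n => p.1 < p.2 ∧ (p.1:ℕ)+1 = (p.2:ℕ)))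
        = Finset.univ.image (fun k : Fin (n-1) =>
            ((⟨(k:ℕ), by omega⟩ : Fin n), (⟨(k:ℕ)+1, by omega⟩ : Fin n))) := by
      ext p
      simp only [Finset.mem_filter, Finset.mem_univ, true_and, Finset.mem_image,
        Prod.ext_iff, Fin.lt_def, Fin.ext_iff]
      constructor
      · rintro ⟨h1, h2⟩
        have := p.2.isLt
        exact ⟨⟨(p.1:ℕ), by omega⟩, by simp; omega⟩
      · rintro ⟨k, hk1, hk2⟩
        have := k.isLt
        omega
    rw [hset, Finset.sum_const, Finset.card_image_of_injective _ ?_]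
    · have h1 : 1 ≤ n := by omega
      simp [Nat.cast_sub h1]
    · intro a b hab
      simp only [Prod.ext_iff, Fin.ext_iff] at hab
      first | exact Fin.ext hab | exact Fin.ext hab.1 | exact Fin.ext hab.1.1
  have hB : ∑ p ∈ Finset.univ.filter (fun p : Fin n × Fin n => p.1 < p.2),
      (if (p.2:ℕ) = n-1 then g p.1 ^ 2 else 0)
      = ∑ j : Fin (n-1), g ⟨(j:ℕ), by omega⟩ ^ 2 := by
    rw [← Finset.sum_filter, Finset.filter_filter]
    have hset : (Finset.univ.filter
        (fun p : Fin n × Fin n => p.1 < p.2 ∧ (p.2:ℕ) = n-1))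
        = Finset.univ.image (fun k : Fin (n-1) =>
            ((⟨(k:ℕ), by omega⟩ : Fin n), (⟨n-1, by omega⟩ : Fin n))) := by
      ext p
      simp only [Finset.mem_filter, Finset.mem_univ, true_and, Finset.mem_image,
        Prod.ext_iff, Fin.lt_def, Fin.ext_iff]
      constructor
      · rintro ⟨h1, h2⟩
        exact ⟨⟨(p.1:ℕ), by omega⟩, by simp; omega⟩
      · rintro ⟨k, hk1, hk2⟩
        have := k.isLt
        omega
    rw [hset, Finset.sum_image ?_]
    · intro a _ b _ hab
      simp only [Prod.ext_iff, Fin.ext_iff] at hab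
      first | exact Fin.ext hab | exact Fin.ext hab.1 | exact Fin.ext hab.1.1
  have hC : ∑ p ∈ Finset.univ.filter (fun p : Fin n × Fin n => p.1 < p.2),
      (if ((p.1:ℕ)+1 = (p.2:ℕ) ∧ (p.2:ℕ) = n-1) then g p.1 else 0)
      = g ⟨n-2, by omega⟩ := by
    rw [← Finset.sum_filter, Finset.filter_filter]
    have hset : (Finset.univ.filter
        (fun p : Fin n × Fin n => p.1 < p.2 ∧ ((p.1:ℕ)+1 = (p.2:ℕ) ∧ (p.2:ℕ) = n-1)))
        = {((⟨n-2, by omega⟩ : Fin n), (⟨n-1, by omega⟩ : Fin n))} := by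
      ext p
      simp only [Finset.mem_filter, Finset.mem_univ, true_and, Finset.mem_singleton,
        Prod.ext_iff, Fin.lt_def, Fin.ext_iff]
      omega
    rw [hset, Finset.sum_singleton]
  rw [hA, hB, hC]
  ring
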